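/- Let m ≥ 0, let Γ ⊆ V_m, let p ∈ Γ, and set Γ' = Γ \ {p}. If x, y ∈ Γ' are distinct points with c^{Γ}_{x,p} > 0 and c^{Γ}_{y,p} > 0, then c^{Γ'}_{x,y} > 0. -/

import Mathlib

open scoped BigOperators

noncomputable section

namespace SGPaper

/-- The three corners of the Sierpinski gasket:
`q₀ = (1/2, √3/2)`, `q₁ = (0,0)`, `q₂ = (1,0)`. -/
def q : Fin 3 → ℝ × ℝ
  | 0 => (1 / 2, Real.sqrt 3 / 2)
  | 1 => (0, 0)
  | 2 => (1, 0)

/-- The contraction map towards corner `i`: `F_i(x) = (x + q_i)/2`. -/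
def Fmap (i : Fin 3) (x : ℝ × ℝ) : ℝ × ℝ := (2⁻¹ : ℝ) • (x + q i)

/-- `Fword w = F_{w₁} ∘ ⋯ ∘ F_{w_m}` for the word `w = w₁⋯w_m`. -/
def Fword (w : List (Fin 3)) : ℝ × ℝ → ℝ × ℝ :=
  w.foldr (fun i f => Fmap i ∘ f) id

/-- The level-`m` vertex set of the Sierpinski gasket:
`V_m = ⋃_{|w| = m} F_w({q₀, q₁, q₂})`. -/
def V (m : ℕ) : Set (ℝ × ℝ) :=
  {x | ∃ w : List (Fin 3), w.length = m ∧ ∃ i : Fin 3, x = Fword w (q i)}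

/-- `x` and `y` are `m`-neighbors: they are distinct and belong to a common
level-`m` cell `F_w({q₀, q₁, q₂})`. -/
def Nbr (m : ℕ) (x y : ℝ × ℝ) : Prop :=
  x ≠ y ∧ ∃ w : List (Fin 3), w.length = m ∧
    (∃ i : Fin 3, x = Fword w (q i)) ∧ (∃ j : Fin 3, y = Fword w (q j))

/-- The value `(u x - u y)²` on the unordered pair `{x, y}`. -/
def edgeVal (u : ℝ × ℝ → ℝ) : Sym2 (ℝ × ℝ) → ℝ :=
  Sym2.lift ⟨fun x y => (u x - u y) ^ 2, fun _ _ => by ring⟩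

/-- The unordered pair `e` is an edge of the level-`m` graph `Γ_m`. -/
def IsEdge (m : ℕ) (e : Sym2 (ℝ × ℝ)) : Prop :=
  ∃ x y : ℝ × ℝ, Nbr m x y ∧ e = s(x, y)

/-- The level-`m` graph energy: `E_m(u) = (5/3)^m Σ (u x − u y)²`, the sum being over
unordered `m`-neighbor pairs `{x, y}` (a finite set, so `tsum` is the honest sum). -/
def Energy (m : ℕ) (u : ℝ × ℝ → ℝ) : ℝ :=
  (5 / 3 : ℝ) ^ m * ∑' e : {e : Sym2 (ℝ × ℝ) // IsEdge m e}, edgeVal u e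

/-- `Q_E(v)`: minimal level-`m` energy among functions `u : V_m → ℝ` agreeing
with `v` on `E` (the minimum is attained, so it equals this infimum). -/
def Q (m : ℕ) (E : Set (ℝ × ℝ)) (v : ℝ × ℝ → ℝ) : ℝ :=
  sInf {r | ∃ u : ℝ × ℝ → ℝ, (∀ x ∈ E, u x = v x) ∧ r = Energy m u}

/-- Indicator function of the point `z`. -/
def ind (z : ℝ × ℝ) : ℝ × ℝ → ℝ := fun t => if t = z then 1 else 0

/-- The conductance `c^E_{x,y} = (Q_E(𝟙_x) + Q_E(𝟙_y) − Q_E(𝟙_x + 𝟙_y))/2`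
between `x, y ∈ E`, computed at level `m`. -/
def cond (m : ℕ) (E : Set (ℝ × ℝ)) (x y : ℝ × ℝ) : ℝ :=
  (Q m E (ind x) + Q m E (ind y) - Q m E (ind x + ind y)) / 2


/-! ### Auxiliary development -/

lemma finite_V (m : ℕ) : (V m).Finite := by
  have h : V m ⊆ Set.image2 (fun (w : List (Fin 3)) (i : Fin 3) => Fword w (q i))
      {w : List (Fin 3) | w.length = m} Set.univ := by
    rintro x ⟨w, hw, i, rfl⟩
    exact ⟨w, hw, i, trivial, rfl⟩
  exact ((List.finite_length_eq (Fin 3) m).image2 _ Set.finite_univ).subset h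

lemma finite_edges (m : ℕ) : {e : Sym2 (ℝ × ℝ) | IsEdge m e}.Finite := by
  have h : {e : Sym2 (ℝ × ℝ) | IsEdge m e} ⊆
      Set.image2 (fun x y => s(x, y)) (V m) (V m) := by
    rintro e ⟨x, y, ⟨hne, w, hw, ⟨i, hi⟩, ⟨j, hj⟩⟩, rfl⟩
    exact ⟨x, ⟨w, hw, i, hi⟩, y, ⟨w, hw, j, hj⟩, rfl⟩
  exact ((finite_V m).image2 _ (finite_V m)).subset h

/-- polarization edge value -/
def edgeB (u w : ℝ × ℝ → ℝ) : Sym2 (ℝ × ℝ) → ℝ :=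
  Sym2.lift ⟨fun x y => (u x - u y) * (w x - w y), fun _ _ => by ring⟩

lemma edgeVal_nonneg (u : ℝ × ℝ → ℝ) (e : Sym2 (ℝ × ℝ)) : 0 ≤ edgeVal u e := by
  induction e using Sym2.ind with
  | _ a b => simp only [edgeVal, Sym2.lift_mk]; positivity

lemma edgeVal_expand (u w : ℝ × ℝ → ℝ) (t : ℝ) (e : Sym2 (ℝ × ℝ)) :
    edgeVal (u + t • w) e = edgeVal u e + 2 * t * edgeB u w e + t ^ 2 * edgeVal w e := by
  induction e using Sym2.ind with
  | _ a b =>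
    simp only [edgeVal, edgeB, Sym2.lift_mk, Pi.add_apply, Pi.smul_apply, smul_eq_mul]
    ring

lemma edgeB_add_smul_left (u v w : ℝ × ℝ → ℝ) (t : ℝ) (e : Sym2 (ℝ × ℝ)) :
    edgeB (u + t • v) w e = edgeB u w e + t * edgeB v w e := by
  induction e using Sym2.ind with
  | _ a b =>
    simp only [edgeB, Sym2.lift_mk, Pi.add_apply, Pi.smul_apply, smul_eq_mul]
    ring

lemma edgeVal_cont (e : Sym2 (ℝ × ℝ)) : Continuous fun u : ℝ × ℝ → ℝ => edgeVal u e := by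
  induction e using Sym2.ind with
  | _ a b =>
    simp only [edgeVal, Sym2.lift_mk]
    exact ((continuous_apply a).sub (continuous_apply b)).pow 2

/-- The polarized bilinear energy form. -/
def Bform (m : ℕ) (u w : ℝ × ℝ → ℝ) : ℝ :=
  (5 / 3 : ℝ) ^ m * ∑' e : {e : Sym2 (ℝ × ℝ) // IsEdge m e}, edgeB u w e

instance edgeFintype (m : ℕ) : Fintype {e : Sym2 (ℝ × ℝ) // IsEdge m e} :=
  (finite_edges m).fintype

lemma energy_eq (m : ℕ) (u : ℝ × ℝ → ℝ) :
    Energy m u = (5 / 3 : ℝ) ^ m * ∑ e : {e : Sym2 (ℝ × ℝ) // IsEdge m e}, edgeVal u e := by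
  rw [Energy, tsum_fintype]

lemma bform_eq (m : ℕ) (u w : ℝ × ℝ → ℝ) :
    Bform m u w = (5 / 3 : ℝ) ^ m * ∑ e : {e : Sym2 (ℝ × ℝ) // IsEdge m e}, edgeB u w e := by
  rw [Bform, tsum_fintype]

lemma energy_nonneg (m : ℕ) (u : ℝ × ℝ → ℝ) : 0 ≤ Energy m u := by
  rw [energy_eq]
  have h : (0:ℝ) ≤ ∑ e : {e : Sym2 (ℝ × ℝ) // IsEdge m e}, edgeVal u e :=
    Finset.sum_nonneg fun e _ => edgeVal_nonneg u e
  positivity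

lemma energy_expand (m : ℕ) (u w : ℝ × ℝ → ℝ) (t : ℝ) :
    Energy m (u + t • w) = Energy m u + 2 * t * Bform m u w + t ^ 2 * Energy m w := by
  simp only [energy_eq, bform_eq]
  simp only [edgeVal_expand]
  rw [Finset.sum_add_distrib, Finset.sum_add_distrib, ← Finset.mul_sum, ← Finset.mul_sum]
  ring

lemma bform_add_smul_left (m : ℕ) (u v w : ℝ × ℝ → ℝ) (t : ℝ) :
    Bform m (u + t • v) w = Bform m u w + t * Bform m v w := by
  simp only [bform_eq]
  simp only [edgeB_add_smul_left]
  rw [Finset.sum_add_distrib, ← Finset.mul_sum]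
  ring

lemma energy_cont (m : ℕ) : Continuous (Energy m) := by
  have h1 : Continuous fun u : ℝ × ℝ → ℝ =>
      ∑ e : {e : Sym2 (ℝ × ℝ) // IsEdge m e}, edgeVal u e :=
    continuous_finset_sum _ fun e _ => edgeVal_cont (e : Sym2 (ℝ × ℝ))
  have h2 : Continuous fun u : ℝ × ℝ → ℝ =>
      (5 / 3 : ℝ) ^ m * ∑ e : {e : Sym2 (ℝ × ℝ) // IsEdge m e}, edgeVal u e :=
    continuous_const.mul h1
  have he : (Energy m) = fun u => (5 / 3 : ℝ) ^ m *
      ∑ e : {e : Sym2 (ℝ × ℝ) // IsEdge m e}, edgeVal u e := by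
    funext u; exact energy_eq m u
  rw [he]; exact h2

lemma energy_le_energy (m : ℕ) {u w : ℝ × ℝ → ℝ}
    (h : ∀ e : Sym2 (ℝ × ℝ), IsEdge m e → edgeVal u e ≤ edgeVal w e) :
    Energy m u ≤ Energy m w := by
  simp only [energy_eq]
  refine mul_le_mul_of_nonneg_left ?_ (by positivity)
  exact Finset.sum_le_sum fun e _ => h e e.2

lemma energy_le_add (m : ℕ) {f g h : ℝ × ℝ → ℝ}
    (H : ∀ e : Sym2 (ℝ × ℝ), IsEdge m e → edgeVal f e ≤ edgeVal g e + edgeVal h e) :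
    Energy m f ≤ Energy m g + Energy m h := by
  simp only [energy_eq]
  rw [← mul_add, ← Finset.sum_add_distrib]
  exact mul_le_mul_of_nonneg_left (Finset.sum_le_sum fun e _ => H e e.2) (by positivity)

lemma Qset_nonempty (m : ℕ) (E : Set (ℝ × ℝ)) (v : ℝ × ℝ → ℝ) :
    {r | ∃ u : ℝ × ℝ → ℝ, (∀ x ∈ E, u x = v x) ∧ r = Energy m u}.Nonempty :=
  ⟨Energy m v, v, fun _ _ => rfl, rfl⟩

lemma Qset_bdd (m : ℕ) (E : Set (ℝ × ℝ)) (v : ℝ × ℝ → ℝ) :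
    BddBelow {r | ∃ u : ℝ × ℝ → ℝ, (∀ x ∈ E, u x = v x) ∧ r = Energy m u} := by
  refine ⟨0, ?_⟩
  rintro r ⟨u, -, rfl⟩
  exact energy_nonneg m u

lemma Q_le (m : ℕ) {E : Set (ℝ × ℝ)} {v u : ℝ × ℝ → ℝ} (hu : ∀ x ∈ E, u x = v x) :
    Q m E v ≤ Energy m u :=
  csInf_le (Qset_bdd m E v) ⟨u, hu, rfl⟩

lemma le_Q (m : ℕ) {E : Set (ℝ × ℝ)} {v : ℝ × ℝ → ℝ} {c : ℝ}
    (h : ∀ u : ℝ × ℝ → ℝ, (∀ x ∈ E, u x = v x) → c ≤ Energy m u) :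
    c ≤ Q m E v := by
  refine le_csInf (Qset_nonempty m E v) ?_
  rintro r ⟨u, hu, rfl⟩
  exact h u hu

/-- clipping to [0,1] -/
def clip (t : ℝ) : ℝ := max 0 (min 1 t)

lemma clip_sq_le (a b : ℝ) : (clip a - clip b) ^ 2 ≤ (a - b) ^ 2 := by
  have h1 : |clip a - clip b| ≤ |a - b| := by
    have h2 : |clip a - clip b| ≤ max |(0:ℝ) - 0| |min 1 a - min 1 b| :=
      abs_max_sub_max_le_max (0:ℝ) (min 1 a) 0 (min 1 b)
    have h3 : |min (1:ℝ) a - min 1 b| ≤ max |(1:ℝ) - 1| |a - b| :=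
      abs_min_sub_min_le_max 1 a 1 b
    rw [sub_self, abs_zero] at h2 h3
    have h3' : |min (1:ℝ) a - min 1 b| ≤ |a - b| :=
      h3.trans (max_le (abs_nonneg _) le_rfl)
    exact h2.trans (max_le (abs_nonneg _) h3')
  calc (clip a - clip b) ^ 2 = |clip a - clip b| ^ 2 := (sq_abs _).symm
    _ ≤ |a - b| ^ 2 := by nlinarith [abs_nonneg (clip a - clip b)]
    _ = (a - b) ^ 2 := sq_abs _

lemma energy_clip_le (m : ℕ) (u : ℝ × ℝ → ℝ) :
    Energy m (fun t => clip (u t)) ≤ Energy m u := by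
  refine energy_le_energy m fun e _ => ?_
  induction e using Sym2.ind with
  | _ a b => simpa only [edgeVal, Sym2.lift_mk] using clip_sq_le (u a) (u b)

lemma max_sq_le (a b c d : ℝ) : (max a b - max c d) ^ 2 ≤ (a - c) ^ 2 + (b - d) ^ 2 := by
  have h1 : |max a b - max c d| ≤ max |a - c| |b - d| := abs_max_sub_max_le_max a b c d
  have h2 : (max a b - max c d) ^ 2 ≤ (max |a - c| |b - d|) ^ 2 := by
    rw [← sq_abs (max a b - max c d)]
    nlinarith [abs_nonneg (max a b - max c d)]
  refine h2.trans ?_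
  rcases max_cases |a - c| |b - d| with ⟨h, -⟩ | ⟨h, -⟩ <;> rw [h] <;>
    nlinarith [sq_nonneg (a - c), sq_nonneg (b - d), sq_abs (a - c), sq_abs (b - d)]

lemma energy_max_le (m : ℕ) (u w : ℝ × ℝ → ℝ) :
    Energy m (fun t => max (u t) (w t)) ≤ Energy m u + Energy m w := by
  have h : ∀ e : Sym2 (ℝ × ℝ), edgeVal (fun t => max (u t) (w t)) e ≤
      edgeVal u e + edgeVal w e := by
    intro e
    induction e using Sym2.ind with
    | _ a b => simpa only [edgeVal, Sym2.lift_mk] using max_sq_le (u a) (w a) (u b) (w b)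
  exact energy_le_add m fun e _ => h e

/-- existence of an energy minimizer for `[0,1]`-valued boundary data -/
lemma exists_min (m : ℕ) (E : Set (ℝ × ℝ)) (v : ℝ × ℝ → ℝ)
    (hv : ∀ z, v z ∈ Set.Icc (0:ℝ) 1) :
    ∃ u0 : ℝ × ℝ → ℝ, (∀ z ∈ E, u0 z = v z) ∧ Energy m u0 = Q m E v := by
  set K : Set (ℝ × ℝ → ℝ) :=
    {u | (∀ z ∈ E, u z = v z)} ∩ Set.pi Set.univ (fun _ => Set.Icc (0:ℝ) 1) with hK
  have hclosed : IsClosed {u : ℝ × ℝ → ℝ | ∀ z ∈ E, u z = v z} := by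
    have : {u : ℝ × ℝ → ℝ | ∀ z ∈ E, u z = v z} = ⋂ z ∈ E, {u : ℝ × ℝ → ℝ | u z = v z} := by
      ext u; simp
    rw [this]
    exact isClosed_biInter fun z _ => isClosed_eq (continuous_apply z) continuous_const
  have hcpt : IsCompact K :=
    IsCompact.inter_left (isCompact_univ_pi fun _ => isCompact_Icc) hclosed
  have hvK : v ∈ K := ⟨fun _ _ => rfl, fun z _ => hv z⟩
  obtain ⟨u0, hu0K, hmin⟩ := hcpt.exists_isMinOn ⟨v, hvK⟩ (energy_cont m).continuousOn
  refine ⟨u0, hu0K.1, le_antisymm ?_ (Q_le m hu0K.1)⟩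
  refine le_Q m fun u hu => ?_
  have hclipK : (fun t => clip (u t)) ∈ K := by
    constructor
    · intro z hz
      have hc : clip (v z) = v z := by
        rcases hv z with ⟨h0, h1⟩
        simp [clip, min_eq_right h1, max_eq_right h0]
      show clip (u z) = v z
      rw [hu z hz, hc]
    · intro z _
      constructor
      · exact le_max_left _ _
      · simp only [clip]
        exact max_le (by norm_num) (min_le_left _ _)
  exact (hmin hclipK).trans (energy_clip_le m u)

lemma energy_add (m : ℕ) (u w : ℝ × ℝ → ℝ) :
    Energy m (u + w) = Energy m u + 2 * Bform m u w + Energy m w := by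
  simpa using energy_expand m u w 1

lemma bform_add_left (m : ℕ) (u v w : ℝ × ℝ → ℝ) :
    Bform m (u + v) w = Bform m u w + Bform m v w := by
  simpa using bform_add_smul_left m u v w 1

/-- Euler–Lagrange: a minimizer is harmonic. -/
lemma harmonic_of_min (m : ℕ) {E : Set (ℝ × ℝ)} {v u0 : ℝ × ℝ → ℝ}
    (hadm : ∀ z ∈ E, u0 z = v z) (hE : Energy m u0 = Q m E v) :
    ∀ w : ℝ × ℝ → ℝ, (∀ z ∈ E, w z = 0) → Bform m u0 w = 0 := by
  intro w hw
  set B := Bform m u0 w with hB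
  set Ew := Energy m w with hEw
  have hEwpos : 0 ≤ Ew := energy_nonneg m w
  have key : ∀ t : ℝ, 0 ≤ 2 * t * B + t ^ 2 * Ew := by
    intro t
    have hadm2 : ∀ z ∈ E, (u0 + t • w) z = v z := by
      intro z hz
      simp only [Pi.add_apply, Pi.smul_apply, smul_eq_mul, hadm z hz, hw z hz, mul_zero, add_zero]
    have h := Q_le m hadm2
    rw [← hE, energy_expand] at h
    linarith
  have h := key (-B / (Ew + 1))
  have hne : Ew + 1 ≠ 0 := by positivity
  have hpos2 : (0:ℝ) < (Ew + 1) ^ 2 := by positivity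
  have h2 : 2 * (-B / (Ew + 1)) * B + (-B / (Ew + 1)) ^ 2 * Ew
      = (-(B ^ 2) * (Ew + 2)) / (Ew + 1) ^ 2 := by field_simp; ring
  rw [h2, le_div_iff₀ hpos2, zero_mul] at h
  have hsq : B ^ 2 = 0 := le_antisymm (by nlinarith) (sq_nonneg B)
  exact sq_eq_zero_iff.mp hsq

/-- harmonic competitors realize the minimum -/
lemma Q_eq_of_harmonic (m : ℕ) {E : Set (ℝ × ℝ)} {v u0 : ℝ × ℝ → ℝ}
    (hadm : ∀ z ∈ E, u0 z = v z)
    (hharm : ∀ w : ℝ × ℝ → ℝ, (∀ z ∈ E, w z = 0) → Bform m u0 w = 0) :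
    Q m E v = Energy m u0 := by
  refine le_antisymm (Q_le m hadm) (le_Q m fun u hu => ?_)
  set w := u - u0 with hwdef
  have hu_eq : u = u0 + (1:ℝ) • w := by
    funext s
    simp [hwdef]
  have hw0 : ∀ z ∈ E, w z = 0 := by
    intro z hz
    simp [hwdef, hu z hz, hadm z hz]
  rw [hu_eq, energy_expand, hharm w hw0]
  have := energy_nonneg m w
  nlinarith

/-- elimination of the point `pp` -/
lemma Qdel (m : ℕ) {Γ : Set (ℝ × ℝ)} {pp : ℝ × ℝ} (hp : pp ∈ Γ)
    {up : ℝ × ℝ → ℝ} (hupΓ : ∀ z ∈ Γ, up z = ind pp z)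
    (hharmp : ∀ w : ℝ × ℝ → ℝ, (∀ z ∈ Γ, w z = 0) → Bform m up w = 0)
    (hα : 0 < Energy m up)
    {v u0 : ℝ × ℝ → ℝ} (hadm : ∀ z ∈ Γ, u0 z = v z)
    (hharm : ∀ w : ℝ × ℝ → ℝ, (∀ z ∈ Γ, w z = 0) → Bform m u0 w = 0)
    (hvp : v pp = 0) :
    Q m (Γ \ {pp}) v = Energy m u0 - (Bform m u0 up) ^ 2 / Energy m up := by
  set B' := Bform m u0 up with hB'
  set α := Energy m up with hαd
  have hαne : α ≠ 0 := ne_of_gt hα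
  refine le_antisymm ?_ (le_Q m fun u hu => ?_)
  · have hadm2 : ∀ z ∈ Γ \ {pp}, (u0 + (-B'/α) • up) z = v z := by
      intro z hz
      obtain ⟨hzΓ, hzp⟩ := hz
      have hzne : z ≠ pp := hzp
      simp only [Pi.add_apply, Pi.smul_apply, smul_eq_mul, hadm z hzΓ, hupΓ z hzΓ, ind,
        if_neg hzne, mul_zero, add_zero]
    have h := Q_le m hadm2
    rw [energy_expand] at h
    have heq : Energy m u0 + 2 * (-B'/α) * B' + (-B'/α) ^ 2 * α
        = Energy m u0 - B' ^ 2 / α := by field_simp; ring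
    rw [heq] at h
    exact h
  · set t := u pp with htd
    set A := u0 + t • up with hAd
    set w := u - A with hwd
    have hu_eq : u = A + (1:ℝ) • w := by funext s; simp [hwd]
    have hw0 : ∀ z ∈ Γ, w z = 0 := by
      intro z hz
      by_cases hzp : z = pp
      · subst hzp
        have h1 : u0 z = 0 := by rw [hadm z hz, hvp]
        have h2 : up z = 1 := by rw [hupΓ z hz]; simp [ind]
        simp [hwd, hAd, h1, h2, htd]
      · have h1 : u z = v z := hu z ⟨hz, hzp⟩
        have h2 : up z = 0 := by rw [hupΓ z hz]; simp [ind, hzp]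
        simp [hwd, hAd, h1, h2, hadm z hz]
    have hAharm : Bform m A w = 0 := by
      rw [hAd, bform_add_smul_left, hharm w hw0, hharmp w hw0]
      ring
    have hEA : Energy m A = Energy m u0 + 2 * t * B' + t ^ 2 * α := energy_expand m u0 up t
    have h1 : Energy m u = Energy m A + Energy m w := by
      rw [hu_eq, energy_expand, hAharm]; ring
    have h2 : 0 ≤ Energy m w := energy_nonneg m w
    have h3 : Energy m u0 - B' ^ 2 / α ≤ Energy m A := by
      rw [hEA]
      have key : 0 ≤ (α * t + B') ^ 2 / α := by positivity
      have heq2 : (α * t + B') ^ 2 / α = 2 * t * B' + t ^ 2 * α + B' ^ 2 / α := by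
        field_simp; ring
      linarith [heq2 ▸ key]
    linarith


/-- Let `Γ ⊆ V_m`, `p ∈ Γ`, `Γ' = Γ \ {p}`. If `x, y ∈ Γ'` are distinct
with `c^Γ_{x,p} > 0` and `c^Γ_{y,p} > 0`, then `c^{Γ'}_{x,y} > 0`. -/
theorem stmt4 (m : ℕ) (Γ : Set (ℝ × ℝ)) (hΓ : Γ ⊆ V m) (pp : ℝ × ℝ) (hp : pp ∈ Γ)
    (x y : ℝ × ℝ) (hx : x ∈ Γ \ {pp}) (hy : y ∈ Γ \ {pp}) (hxy : x ≠ y)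
    (hxp : 0 < cond m Γ x pp) (hyp : 0 < cond m Γ y pp) :
    0 < cond m (Γ \ {pp}) x y := by
  obtain ⟨hxΓ, hxnp⟩ := hx
  obtain ⟨hyΓ, hynp⟩ := hy
  have hxnp' : x ≠ pp := hxnp
  have hynp' : y ≠ pp := hynp
  have hind01 : ∀ a : ℝ × ℝ, ∀ z, ind a z ∈ Set.Icc (0:ℝ) 1 := by
    intro a z; simp only [ind]; split_ifs <;> norm_num
  obtain ⟨ux, huxΓ, huxE⟩ := exists_min m Γ (ind x) (hind01 x)
  obtain ⟨uy, huyΓ, huyE⟩ := exists_min m Γ (ind y) (hind01 y)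
  obtain ⟨up, hupΓ, hupE⟩ := exists_min m Γ (ind pp) (hind01 pp)
  have hharmx := harmonic_of_min m huxΓ huxE
  have hharmy := harmonic_of_min m huyΓ huyE
  have hharmp := harmonic_of_min m hupΓ hupE
  set Bxp := Bform m ux up with hBxp
  set Byp := Bform m uy up with hByp
  set Bxy := Bform m ux uy with hBxy
  set α := Energy m up with hαd
  have hQx : Q m Γ (ind x) = Energy m ux := huxE.symm
  have hQy : Q m Γ (ind y) = Energy m uy := huyE.symm
  have hQp : Q m Γ (ind pp) = α := hupE.symm
  have hsum_adm : ∀ (a b : ℝ × ℝ) (ua ub : ℝ × ℝ → ℝ),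
      (∀ z ∈ Γ, ua z = ind a z) → (∀ z ∈ Γ, ub z = ind b z) →
      ∀ z ∈ Γ, (ua + ub) z = (ind a + ind b) z := by
    intro a b ua ub ha hb z hz
    simp [ha z hz, hb z hz]
  have hsum_harm : ∀ (ua ub : ℝ × ℝ → ℝ),
      (∀ w : ℝ × ℝ → ℝ, (∀ z ∈ Γ, w z = 0) → Bform m ua w = 0) →
      (∀ w : ℝ × ℝ → ℝ, (∀ z ∈ Γ, w z = 0) → Bform m ub w = 0) →
      ∀ w : ℝ × ℝ → ℝ, (∀ z ∈ Γ, w z = 0) → Bform m (ua + ub) w = 0 := by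
    intro ua ub ha hb w hw
    rw [bform_add_left, ha w hw, hb w hw, add_zero]
  have hQxp : Q m Γ (ind x + ind pp) = Energy m (ux + up) :=
    Q_eq_of_harmonic m (hsum_adm x pp ux up huxΓ hupΓ) (hsum_harm ux up hharmx hharmp)
  have hQyp : Q m Γ (ind y + ind pp) = Energy m (uy + up) :=
    Q_eq_of_harmonic m (hsum_adm y pp uy up huyΓ hupΓ) (hsum_harm uy up hharmy hharmp)
  have hQxy : Q m Γ (ind x + ind y) = Energy m (ux + uy) :=
    Q_eq_of_harmonic m (hsum_adm x y ux uy huxΓ huyΓ) (hsum_harm ux uy hharmx hharmy)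
  have hcx : cond m Γ x pp = -Bxp := by
    rw [cond, hQx, hQp, hQxp, energy_add]; ring
  have hcy : cond m Γ y pp = -Byp := by
    rw [cond, hQy, hQp, hQyp, energy_add]; ring
  have hBxpneg : Bxp < 0 := by rw [hcx] at hxp; linarith
  have hBypneg : Byp < 0 := by rw [hcy] at hyp; linarith
  have hmaxadm : ∀ z ∈ Γ, (fun t => max (ux t) (uy t)) z = (ind x + ind y) z := by
    intro z hz
    show max (ux z) (uy z) = _
    rw [huxΓ z hz, huyΓ z hz]
    simp only [ind, Pi.add_apply]
    split_ifs with h1 h2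
    · exact absurd (h1.symm.trans h2) hxy
    · norm_num
    · norm_num
    · norm_num
  have hMarkov : Bxy ≤ 0 := by
    have h1 : Q m Γ (ind x + ind y) ≤ Energy m ux + Energy m uy :=
      (Q_le m hmaxadm).trans (energy_max_le m ux uy)
    rw [hQxy, energy_add] at h1
    linarith
  have hαpos : 0 < α := by
    rcases (energy_nonneg m up).lt_or_eq with h | h
    · exact h
    · exfalso
      have hα0 : α = 0 := hαd.trans h.symm
      set t0 := -(Energy m ux + 1) / (2 * Bxp) with ht0
      have hB0 : Bxp ≠ 0 := ne_of_lt hBxpneg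
      have hE := energy_nonneg m (ux + t0 • up)
      rw [energy_expand, ← hαd, ← hBxp, hα0] at hE
      have h2 : 2 * t0 * Bxp = -(Energy m ux + 1) := by
        rw [ht0]; field_simp
      rw [h2] at hE
      nlinarith
  have hvpx : ind x pp = 0 := by simp [ind, (Ne.symm hxnp' : pp ≠ x)]
  have hvpy : ind y pp = 0 := by simp [ind, (Ne.symm hynp' : pp ≠ y)]
  have hQ'x : Q m (Γ \ {pp}) (ind x) = Energy m ux - Bxp ^ 2 / α :=
    Qdel m hp hupΓ hharmp hαpos huxΓ hharmx hvpx
  have hQ'y : Q m (Γ \ {pp}) (ind y) = Energy m uy - Byp ^ 2 / α :=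
    Qdel m hp hupΓ hharmp hαpos huyΓ hharmy hvpy
  have hvpxy : (ind x + ind y) pp = 0 := by simp [Pi.add_apply, hvpx, hvpy]
  have hQ'xy : Q m (Γ \ {pp}) (ind x + ind y)
      = Energy m (ux + uy) - (Bform m (ux + uy) up) ^ 2 / α :=
    Qdel m hp hupΓ hharmp hαpos (hsum_adm x y ux uy huxΓ huyΓ)
      (hsum_harm ux uy hharmx hharmy) hvpxy
  have hBsum : Bform m (ux + uy) up = Bxp + Byp := bform_add_left m ux uy up
  rw [cond, hQ'x, hQ'y, hQ'xy, hBsum, energy_add]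
  have hfinal : (Energy m ux - Bxp ^ 2 / α + (Energy m uy - Byp ^ 2 / α) -
      (Energy m ux + 2 * Bxy + Energy m uy - (Bxp + Byp) ^ 2 / α)) / 2
      = Bxp * Byp / α - Bxy := by
    field_simp
    ring
  have hpos : 0 < Bxp * Byp / α := div_pos (mul_pos_of_neg_of_neg hBxpneg hBypneg) hαpos
  rw [hfinal]
  linarith

end SGPaper
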